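/- Conversely, for a symmetric nonnegative matrix, zero effective reproduction number forces an independent support: let K be a symmetric N×N matrix with nonnegative entries and η ∈ [0,1]^N with ρ(K·diag(η)) = 0. Then K_{ij} = 0 for all i, j in the support {i : η_i > 0}; consequently with the uniform cost C(η) = 1 − (1/N)Σ η_i, one has C(η) ≥ 1 − α(K), where α(K) is the maximal proportion |A|/N over subsets A with K zero on A×A. -/

import Mathlib

open Matrix Polynomial

/-- The spectral radius of a real square matrix: the supremum of the moduli of its
complex eigenvalues (roots of the characteristic polynomial over `ℂ`). -/
noncomputable def specRad {N : ℕ} (M : Matrix (Fin N) (Fin N) ℝ) : ℝ :=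
  sSup {r : ℝ | ∃ z : ℂ, ((M.map (algebraMap ℝ ℂ)).charpoly).IsRoot z ∧ r = ‖z‖}

theorem zero_specRad_implies_independent_support {N : ℕ} (hN : 0 < N)
    (K : Matrix (Fin N) (Fin N) ℝ) (hK : ∀ i j, 0 ≤ K i j) (hsym : K.IsSymm)
    (η : Fin N → ℝ) (hη : ∀ i, 0 ≤ η i ∧ η i ≤ 1)
    (hzero : specRad (K * Matrix.diagonal η) = 0) :
    (∀ i j, 0 < η i → 0 < η j → K i j = 0) ∧
      1 - (∑ i, η i) / N ≥
        1 - sSup {r : ℝ | ∃ A : Finset (Fin N),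
          (∀ i ∈ A, ∀ j ∈ A, K i j = 0) ∧ r = (A.card : ℝ) / N} := by
  set M : Matrix (Fin N) (Fin N) ℝ := K * Matrix.diagonal η with hM
  set Kc : Matrix (Fin N) (Fin N) ℂ := M.map (algebraMap ℝ ℂ) with hKcdef
  have hmonic : Kc.charpoly.Monic := Kc.charpoly_monic
  have hp0 : Kc.charpoly ≠ 0 := hmonic.ne_zero
  have hnd : Kc.charpoly.natDegree = N := by
    simpa using Kc.charpoly_natDegree_eq_dim
  -- the set of moduli of roots is finite, hence bounded above
  have hfin : ({r : ℝ | ∃ z : ℂ, Kc.charpoly.IsRoot z ∧ r = ‖z‖}).Finite := by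
    have h1 : {r : ℝ | ∃ z : ℂ, Kc.charpoly.IsRoot z ∧ r = ‖z‖}
        = (‖·‖) '' {z : ℂ | Kc.charpoly.IsRoot z} := by
      ext r; simp [Set.mem_image, eq_comm, and_comm]
    rw [h1]
    exact (Polynomial.finite_setOf_isRoot hp0).image _
  have hbdd : BddAbove {r : ℝ | ∃ z : ℂ, Kc.charpoly.IsRoot z ∧ r = ‖z‖} :=
    hfin.bddAbove
  -- every root is zero
  have hroots0 : ∀ z : ℂ, Kc.charpoly.IsRoot z → z = 0 := by
    intro z hz
    have hmem : ‖z‖ ∈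
        {r : ℝ | ∃ z : ℂ, Kc.charpoly.IsRoot z ∧ r = ‖z‖} := ⟨z, hz, rfl⟩
    have hle : ‖z‖ ≤ 0 := by
      have := le_csSup hbdd hmem
      rwa [show sSup {r : ℝ | ∃ z : ℂ, Kc.charpoly.IsRoot z ∧ r = ‖z‖} = 0
        from hzero] at this
    have : ‖z‖ = 0 := le_antisymm hle (norm_nonneg z)
    exact norm_eq_zero.mp this
  -- charpoly = X^N
  have hcp : Kc.charpoly = X ^ N := by
    have hsplit : Kc.charpoly.Splits := IsAlgClosed.splits _
    have heq := hsplit.eq_prod_roots_of_monic hmonic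
    have hroots : Kc.charpoly.roots = Multiset.replicate N 0 := by
      have hcard : Multiset.card Kc.charpoly.roots = N := by
        rw [Polynomial.splits_iff_card_roots.mp hsplit, hnd]
      refine Multiset.eq_replicate.mpr ⟨hcard, ?_⟩
      intro b hb
      exact hroots0 b (Polynomial.isRoot_of_mem_roots hb)
    rw [heq, hroots]
    simp [Multiset.map_replicate, Multiset.prod_replicate]
  -- Cayley–Hamilton: Kc ^ N = 0, hence M ^ N = 0
  have hKcN : Kc ^ N = 0 := by
    have := Kc.aeval_self_charpoly
    rwa [hcp, map_pow, aeval_X] at this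
  have hMN : M ^ N = 0 := by
    have hmap : ((algebraMap ℝ ℂ).mapMatrix (M ^ N) : Matrix (Fin N) (Fin N) ℂ) = 0 := by
      rw [map_pow]
      exact hKcN
    have hinj : Function.Injective ((algebraMap ℝ ℂ).mapMatrix :
        Matrix (Fin N) (Fin N) ℝ → Matrix (Fin N) (Fin N) ℂ) := by
      intro A B hAB
      ext i j
      have := congrFun (congrFun hAB i) j
      exact (algebraMap ℝ ℂ).injective this
    have : (algebraMap ℝ ℂ).mapMatrix (M ^ N) = (algebraMap ℝ ℂ).mapMatrix (0 : Matrix (Fin N) (Fin N) ℝ) := by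
      simpa using hmap
    exact hinj this
  -- trace of M^2 is zero
  have hnil : IsNilpotent (M * M) := by
    refine ⟨N, ?_⟩
    have : (M * M) ^ N = M ^ N * M ^ N := by
      rw [← pow_two, ← pow_mul, two_mul, pow_add]
    rw [this, hMN, zero_mul]
  have htr : Matrix.trace (M * M) = 0 :=
    (Matrix.isNilpotent_trace_of_isNilpotent hnil).eq_zero
  have hterm : ∀ i j, M i j * M j i = K i j ^ 2 * (η i * η j) := by
    intro i j
    have h1 : M i j = K i j * η j := Matrix.mul_diagonal _ _ _ _
    have h2 : M j i = K j i * η i := Matrix.mul_diagonal _ _ _ _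
    have h3 : K j i = K i j := by
      have := hsym; rw [Matrix.IsSymm] at this
      have := congrFun (congrFun this i) j
      simpa [Matrix.transpose_apply] using this
    rw [h1, h2, h3]; ring
  have hsum : ∑ i, ∑ j, K i j ^ 2 * (η i * η j) = 0 := by
    have : Matrix.trace (M * M) = ∑ i, ∑ j, M i j * M j i := by
      simp [Matrix.trace, Matrix.diag, Matrix.mul_apply]
    rw [this] at htr
    rw [← htr]
    exact Finset.sum_congr rfl fun i _ => Finset.sum_congr rfl fun j _ => (hterm i j).symm
  have hmain : ∀ i j, 0 < η i → 0 < η j → K i j = 0 := by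
    intro i j hi hj
    have hnn : ∀ i ∈ Finset.univ, (0:ℝ) ≤ ∑ j, K i j ^ 2 * (η i * η j) := by
      intro i _
      exact Finset.sum_nonneg fun j _ => mul_nonneg (sq_nonneg _)
        (mul_nonneg (hη i).1 (hη j).1)
    have h1 := (Finset.sum_eq_zero_iff_of_nonneg hnn).mp hsum i (Finset.mem_univ i)
    have hnn2 : ∀ j ∈ Finset.univ, (0:ℝ) ≤ K i j ^ 2 * (η i * η j) :=
      fun j _ => mul_nonneg (sq_nonneg _) (mul_nonneg (hη i).1 (hη j).1)
    have h2 := (Finset.sum_eq_zero_iff_of_nonneg hnn2).mp h1 j (Finset.mem_univ j)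
    have hpos : 0 < η i * η j := mul_pos hi hj
    have : K i j ^ 2 = 0 := by
      by_contra hne
      exact hne (by
        have := mul_eq_zero.mp h2
        rcases this with h | h
        · exact h
        · exact absurd h hpos.ne')
    exact pow_eq_zero_iff (two_ne_zero) |>.mp this
  refine ⟨hmain, ?_⟩
  -- second part
  set A : Finset (Fin N) := Finset.univ.filter (fun i => 0 < η i) with hA
  have hAprop : ∀ i ∈ A, ∀ j ∈ A, K i j = 0 := by
    intro i hi j hj
    rw [hA, Finset.mem_filter] at hi hj
    exact hmain i j hi.2 hj.2
  have hSne : ((A.card : ℝ) / N) ∈ {r : ℝ | ∃ A : Finset (Fin N),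
      (∀ i ∈ A, ∀ j ∈ A, K i j = 0) ∧ r = (A.card : ℝ) / N} := ⟨A, hAprop, rfl⟩
  have hSbdd : BddAbove {r : ℝ | ∃ A : Finset (Fin N),
      (∀ i ∈ A, ∀ j ∈ A, K i j = 0) ∧ r = (A.card : ℝ) / N} := by
    refine ⟨1, ?_⟩
    rintro r ⟨B, _, rfl⟩
    have hBcard : (B.card : ℝ) ≤ N := by
      exact_mod_cast le_trans (Finset.card_le_card (Finset.subset_univ B))
        (le_of_eq (Finset.card_univ.trans (Fintype.card_fin N)))
    rw [div_le_one (by exact_mod_cast hN)]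
    exact hBcard
  have hle1 : (A.card : ℝ) / N ≤ sSup {r : ℝ | ∃ A : Finset (Fin N),
      (∀ i ∈ A, ∀ j ∈ A, K i j = 0) ∧ r = (A.card : ℝ) / N} := le_csSup hSbdd hSne
  have hsumle : (∑ i, η i) ≤ A.card := by
    have : (∑ i, η i) = ∑ i ∈ A, η i := by
      rw [hA]
      refine (Finset.sum_filter_of_ne ?_).symm
      intro i _ hne
      rcases lt_or_eq_of_le (hη i).1 with h | h
      · exact h
      · exact absurd h.symm hne
    rw [this]
    calc ∑ i ∈ A, η i ≤ ∑ i ∈ A, 1 := Finset.sum_le_sum fun i _ => (hη i).2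
    _ = A.card := by simp
  have hNpos : (0:ℝ) < N := by exact_mod_cast hN
  have : (∑ i, η i) / N ≤ (A.card : ℝ) / N := by gcongr
  linarith [hle1, this]
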